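/- Let G be a finite connected graph that is [p]-edge geodetic and H a finite connected graph that is [q]-edge geodetic, so that the Cartesian product G □ H is [p+q]-edge geodetic. Then |gen(G □ H)| ≤ |gen(G)|·|V(H)| + |gen(H)|·|V(G)|, where |gen(·)| denotes the minimum number of geodesics of the respective maximal length covering all edges of the respective graph. -/

import Mathlib

open SimpleGraph

/-- A walk is a `k`-geodesic if it has length `k` and is a shortest path
between its endpoints. -/
def IsKGeodesic {V : Type*} (G : SimpleGraph V) (k : ℕ) {u v : V} (w : G.Walk u v) : Prop :=
  w.length = k ∧ G.dist u v = k

/-- A graph is `k`-edge geodetic if every edge lies on some `k`-geodesic. -/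
def IsEdgeGeodetic {V : Type*} (G : SimpleGraph V) (k : ℕ) : Prop :=
  ∀ e ∈ G.edgeSet, ∃ (u v : V) (w : G.Walk u v), IsKGeodesic G k w ∧ e ∈ w.edges

/-- A graph is `[k]`-edge geodetic if it is `k`-edge geodetic but not `(k+1)`-edge geodetic. -/
def IsMaxEdgeGeodetic {V : Type*} (G : SimpleGraph V) (k : ℕ) : Prop :=
  IsEdgeGeodetic G k ∧ ¬ IsEdgeGeodetic G (k + 1)

/-- `genNum G k` is the minimum number of `k`-geodesics of `G` whose edges
together cover all edges of `G`. -/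
noncomputable def genNum {V : Type*} (G : SimpleGraph V) (k : ℕ) : ℕ :=
  sInf {r : ℕ | ∃ f : Fin r → Σ u : V, Σ v : V, G.Walk u v,
    (∀ i, IsKGeodesic G k (f i).2.2) ∧
    ∀ e ∈ G.edgeSet, ∃ i, e ∈ (f i).2.2.edges}

section Aux

variable {α β : Type*} {G : SimpleGraph α} {H : SimpleGraph β}

lemma aux_dist_sum_le (hGc : G.Connected) (hHc : H.Connected) :
    ∀ {x y : α × β} (w : (G □ H).Walk x y),
      G.dist x.1 y.1 + H.dist x.2 y.2 ≤ w.length := by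
  intro x y w
  induction w with
  | nil => simp
  | @cons u v y h w ih =>
    rw [Walk.length_cons]
    rcases h with ⟨hG, heq⟩ | ⟨hH, heq⟩
    · have h1 : G.dist u.1 y.1 ≤ 1 + G.dist v.1 y.1 := by
        calc G.dist u.1 y.1 ≤ G.dist u.1 v.1 + G.dist v.1 y.1 := hGc.dist_triangle
        _ ≤ 1 + G.dist v.1 y.1 := by
            have : G.dist u.1 v.1 ≤ 1 := by simpa using G.dist_le (hG.toWalk)
            omega
      rw [heq]; omega
    · have h1 : H.dist u.2 y.2 ≤ 1 + H.dist v.2 y.2 := by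
        calc H.dist u.2 y.2 ≤ H.dist u.2 v.2 + H.dist v.2 y.2 := hHc.dist_triangle
        _ ≤ 1 + H.dist v.2 y.2 := by
            have : H.dist u.2 v.2 ≤ 1 := by simpa using H.dist_le (hH.toWalk)
            omega
      rw [heq]; omega

lemma aux_combo_left [DecidableEq β]
    (hGc : G.Connected) (hHc : H.Connected) {p q : ℕ}
    {a₁ a₂ : α} {c₁ c₂ : β} (w : G.Walk a₁ a₂) (hw : IsKGeodesic G p w)
    (z : H.Walk c₁ c₂) (hz : IsKGeodesic H q z) (b : β) (hb : b ∈ z.support) :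
    ∃ W : (G □ H).Walk (a₁, c₁) (a₂, c₂), IsKGeodesic (G □ H) (p + q) W ∧
      ∀ e ∈ w.edges, Sym2.map (fun a => (a, b)) e ∈ W.edges := by
  refine ⟨((z.takeUntil b hb).boxProdRight G a₁).append
    ((w.boxProdLeft H b).append ((z.dropUntil b hb).boxProdRight G a₂)), ?_, ?_⟩
  · have hzq : (z.takeUntil b hb).length + (z.dropUntil b hb).length = q := by
      have h1 := congr_arg Walk.length (z.take_spec hb)
      rw [Walk.length_append] at h1
      rw [h1]; exact hz.1
    have hlen : (((z.takeUntil b hb).boxProdRight G a₁).append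
        ((w.boxProdLeft H b).append ((z.dropUntil b hb).boxProdRight G a₂))).length = p + q := by
      simp only [Walk.length_append]
      have l1 : ((z.takeUntil b hb).boxProdRight G a₁).length = (z.takeUntil b hb).length :=
        Walk.length_map _ _
      have l2 : (w.boxProdLeft H b).length = w.length := Walk.length_map _ _
      have l3 : ((z.dropUntil b hb).boxProdRight G a₂).length = (z.dropUntil b hb).length :=
        Walk.length_map _ _
      have := hw.1
      omega
    refine ⟨hlen, ?_⟩
    refine le_antisymm ?_ ?_
    · calc (G □ H).dist (a₁, c₁) (a₂, c₂) ≤ _ := (G □ H).dist_le _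
      _ = p + q := hlen
    · calc p + q = G.dist a₁ a₂ + H.dist c₁ c₂ := by rw [hw.2, hz.2]
      _ ≤ ((hGc.boxProd hHc).exists_walk_length_eq_dist (a₁, c₁) (a₂, c₂)).choose.length :=
          aux_dist_sum_le hGc hHc (x := (a₁, c₁)) (y := (a₂, c₂)) _
      _ = (G □ H).dist (a₁, c₁) (a₂, c₂) :=
          ((hGc.boxProd hHc).exists_walk_length_eq_dist (a₁, c₁) (a₂, c₂)).choose_spec
  · intro e he
    simp only [Walk.edges_append, List.mem_append]
    right; left
    rw [show (w.boxProdLeft H b).edges = w.edges.map (Sym2.map (G.boxProdLeft H b).toHom) from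
      Walk.edges_map _ _]
    exact List.mem_map_of_mem he

lemma aux_combo_right [DecidableEq α]
    (hGc : G.Connected) (hHc : H.Connected) {p q : ℕ}
    {a₁ a₂ : α} {c₁ c₂ : β} (t : G.Walk a₁ a₂) (ht : IsKGeodesic G p t)
    (z : H.Walk c₁ c₂) (hz : IsKGeodesic H q z) (a : α) (ha : a ∈ t.support) :
    ∃ W : (G □ H).Walk (a₁, c₁) (a₂, c₂), IsKGeodesic (G □ H) (p + q) W ∧
      ∀ e ∈ z.edges, Sym2.map (fun c => (a, c)) e ∈ W.edges := by
  refine ⟨((t.takeUntil a ha).boxProdLeft H c₁).append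
    ((z.boxProdRight G a).append ((t.dropUntil a ha).boxProdLeft H c₂)), ?_, ?_⟩
  · have htp : (t.takeUntil a ha).length + (t.dropUntil a ha).length = p := by
      have h1 := congr_arg Walk.length (t.take_spec ha)
      rw [Walk.length_append] at h1
      rw [h1]; exact ht.1
    have hlen : (((t.takeUntil a ha).boxProdLeft H c₁).append
        ((z.boxProdRight G a).append ((t.dropUntil a ha).boxProdLeft H c₂))).length = p + q := by
      simp only [Walk.length_append]
      have l1 : ((t.takeUntil a ha).boxProdLeft H c₁).length = (t.takeUntil a ha).length :=
        Walk.length_map _ _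
      have l2 : (z.boxProdRight G a).length = z.length := Walk.length_map _ _
      have l3 : ((t.dropUntil a ha).boxProdLeft H c₂).length = (t.dropUntil a ha).length :=
        Walk.length_map _ _
      have := hz.1
      omega
    refine ⟨hlen, ?_⟩
    refine le_antisymm ?_ ?_
    · calc (G □ H).dist (a₁, c₁) (a₂, c₂) ≤ _ := (G □ H).dist_le _
      _ = p + q := hlen
    · calc p + q = G.dist a₁ a₂ + H.dist c₁ c₂ := by rw [ht.2, hz.2]
      _ ≤ ((hGc.boxProd hHc).exists_walk_length_eq_dist (a₁, c₁) (a₂, c₂)).choose.length :=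
          aux_dist_sum_le hGc hHc (x := (a₁, c₁)) (y := (a₂, c₂)) _
      _ = (G □ H).dist (a₁, c₁) (a₂, c₂) :=
          ((hGc.boxProd hHc).exists_walk_length_eq_dist (a₁, c₁) (a₂, c₂)).choose_spec
  · intro e he
    simp only [Walk.edges_append, List.mem_append]
    right; left
    rw [show (z.boxProdRight G a).edges = z.edges.map (Sym2.map (G.boxProdRight H a).toHom) from
      Walk.edges_map _ _]
    exact List.mem_map_of_mem he

lemma aux_edgeSet_nonempty {k : ℕ} (h : IsMaxEdgeGeodetic G k) : G.edgeSet.Nonempty := by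
  by_contra hne
  rw [Set.not_nonempty_iff_eq_empty] at hne
  exact h.2 fun e he => absurd he (by rw [hne]; exact Set.notMem_empty e)

lemma aux_exists_neighbor (hc : G.Connected) (hne : G.edgeSet.Nonempty) (a : α) :
    ∃ a', G.Adj a a' := by
  obtain ⟨e, he⟩ := hne
  induction e with
  | h c d =>
    by_cases hac : a = c
    · exact ⟨d, hac ▸ he⟩
    · obtain ⟨wk⟩ := hc a c
      exact ⟨wk.getVert 1, wk.adj_snd (Walk.not_nil_of_ne hac)⟩

lemma aux_exists_geodesic_through {k : ℕ} (hc : G.Connected) (h : IsMaxEdgeGeodetic G k)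
    (a : α) : ∃ (u v : α) (z : G.Walk u v), IsKGeodesic G k z ∧ a ∈ z.support := by
  obtain ⟨a', ha'⟩ := aux_exists_neighbor hc (aux_edgeSet_nonempty h) a
  obtain ⟨u, v, z, hz, he⟩ := h.1 s(a, a') ha'
  exact ⟨u, v, z, hz, z.fst_mem_support_of_mem_edges he⟩

lemma aux_genNum_spec [Fintype α] (k : ℕ) (h : IsEdgeGeodetic G k)
    (hne : G.edgeSet.Nonempty) :
    ∃ f : Fin (genNum G k) → Σ u : α, Σ v : α, G.Walk u v,
      (∀ i, IsKGeodesic G k (f i).2.2) ∧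
      ∀ e ∈ G.edgeSet, ∃ i, e ∈ (f i).2.2.edges := by
  classical
  have hmem : Fintype.card (Sym2 α) ∈ {r : ℕ | ∃ f : Fin r → Σ u : α, Σ v : α, G.Walk u v,
      (∀ i, IsKGeodesic G k (f i).2.2) ∧ ∀ e ∈ G.edgeSet, ∃ i, e ∈ (f i).2.2.edges} := by
    obtain ⟨e₀, he₀⟩ := hne
    obtain ⟨u₀, v₀, w₀, hw₀, -⟩ := h e₀ he₀
    refine ⟨fun i => if he : (Fintype.equivFin (Sym2 α)).symm i ∈ G.edgeSet then
        ⟨_, _, (h _ he).choose_spec.choose_spec.choose⟩ else ⟨u₀, v₀, w₀⟩, fun i => ?_, ?_⟩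
    · dsimp only
      by_cases he : (Fintype.equivFin (Sym2 α)).symm i ∈ G.edgeSet
      · rw [dif_pos he]
        exact (h _ he).choose_spec.choose_spec.choose_spec.1
      · rw [dif_neg he]
        exact hw₀
    · intro e he
      refine ⟨Fintype.equivFin (Sym2 α) e, ?_⟩
      dsimp only
      rw [dif_pos (by simpa using he)]
      have := (h _ (show (Fintype.equivFin (Sym2 α)).symm (Fintype.equivFin (Sym2 α) e)
        ∈ G.edgeSet by simpa using he)).choose_spec.choose_spec.choose_spec.2
      simpa using this
  exact Nat.sInf_mem ⟨_, hmem⟩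

end Aux

/-- If `G` is a finite connected `[p]`-edge geodetic graph and `H` is a finite connected
`[q]`-edge geodetic graph (so that `G □ H` is `[p + q]`-edge geodetic), then
`|gen(G □ H)| ≤ |gen(G)|·|V(H)| + |gen(H)|·|V(α)|`. -/
theorem boxProd_genNum_le {α β : Type*} [Fintype α] [Fintype β]
    (G : SimpleGraph α) (H : SimpleGraph β) (hGc : G.Connected) (hHc : H.Connected)
    (p q : ℕ) (hG : IsMaxEdgeGeodetic G p) (hH : IsMaxEdgeGeodetic H q) :
    genNum (G □ H) (p + q) ≤ genNum G p * Fintype.card β + genNum H q * Fintype.card α := by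
  classical
  obtain ⟨fG, hfG1, hfG2⟩ := aux_genNum_spec p hG.1 (aux_edgeSet_nonempty hG)
  obtain ⟨fH, hfH1, hfH2⟩ := aux_genNum_spec q hH.1 (aux_edgeSet_nonempty hH)
  -- for each b : β, a q-geodesic of H through b
  choose zu zv zw hzg hzs using fun b : β => aux_exists_geodesic_through hHc hH b
  -- for each a : α, a p-geodesic of G through a
  choose tu tv tw htg hts using fun a : α => aux_exists_geodesic_through hGc hG a
  have hcard : Fintype.card ((Fin (genNum G p) × β) ⊕ (Fin (genNum H q) × α))
      = genNum G p * Fintype.card β + genNum H q * Fintype.card α := by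
    simp
  have main : ∀ i : (Fin (genNum G p) × β) ⊕ (Fin (genNum H q) × α), ∃ W : Σ x : α × β, Σ y : α × β, (G □ H).Walk x y,
      IsKGeodesic (G □ H) (p + q) W.2.2 ∧
      (∀ i' b, i = .inl (i', b) →
        ∀ e ∈ (fG i').2.2.edges, Sym2.map (fun a => (a, b)) e ∈ W.2.2.edges) ∧
      (∀ j a, i = .inr (j, a) →
        ∀ e ∈ (fH j).2.2.edges, Sym2.map (fun c => (a, c)) e ∈ W.2.2.edges) := by
    rintro (⟨i, b⟩ | ⟨j, a⟩)
    · obtain ⟨W, h1, h2⟩ := aux_combo_left hGc hHc (fG i).2.2 (hfG1 i)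
        (zw b) (hzg b) b (hzs b)
      refine ⟨⟨_, _, W⟩, h1, ?_, ?_⟩
      · rintro i' b' h e hme
        obtain ⟨rfl, rfl⟩ : i' = i ∧ b' = b := by
          simpa [Sum.inl.injEq, Sum.inr.injEq, Prod.ext_iff] using h.symm
        exact h2 e hme
      · rintro j a h
        exact absurd h (by simp)
    · obtain ⟨W, h1, h2⟩ := aux_combo_right hGc hHc (tw a) (htg a)
        (fH j).2.2 (hfH1 j) a (hts a)
      refine ⟨⟨_, _, W⟩, h1, ?_, ?_⟩
      · rintro i' b' h
        exact absurd h (by simp)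
      · rintro j' a' h e hme
        obtain ⟨rfl, rfl⟩ : j' = j ∧ a' = a := by
          simpa [Sum.inl.injEq, Sum.inr.injEq, Prod.ext_iff] using h.symm
        exact h2 e hme
  choose F hF1 hF2 hF3 using main
  have E := Fintype.equivFinOfCardEq hcard
  apply Nat.sInf_le
  refine ⟨fun n => F (E.symm n), fun n => hF1 _, fun e he => ?_⟩
  induction e with
  | h x y =>
    obtain ⟨x1, x2⟩ := x
    obtain ⟨y1, y2⟩ := y
    rw [mem_edgeSet] at he
    rcases he with ⟨hA, heq⟩ | ⟨hA, heq⟩ <;> dsimp at hA heq <;> subst heq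
    · obtain ⟨i, hi⟩ := hfG2 s(x1, y1) hA
      refine ⟨E (.inl (i, x2)), ?_⟩
      have := hF2 (.inl (i, x2)) i x2 rfl s(x1, y1) hi
      rw [Sym2.map_pair_eq] at this
      show s((x1, x2), (y1, x2)) ∈ (F (E.symm (E (Sum.inl (i, x2))))).snd.snd.edges
      rw [Equiv.symm_apply_apply]
      exact this
    · obtain ⟨j, hj⟩ := hfH2 s(x2, y2) hA
      refine ⟨E (.inr (j, x1)), ?_⟩
      have := hF3 (.inr (j, x1)) j x1 rfl s(x2, y2) hj
      rw [Sym2.map_pair_eq] at this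
      show s((x1, x2), (x1, y2)) ∈ (F (E.symm (E (Sum.inr (j, x1))))).snd.snd.edges
      rw [Equiv.symm_apply_apply]
      exact this
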